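/- arXiv:2411.11215 — 3 statements merged into one kernel-verified Lean document; each statement's English description precedes it below -/
import Mathlib

section
/- Let Δ be a nonempty compact convex subset of ℝⁿ contained in an affine hyperplane {x : ℓ(x) = 1} for some linear functional ℓ. Then every face of conv({0} ∪ Δ) that does not contain 0 is a face of Δ, and conversely every face of Δ is a face of conv({0} ∪ Δ) not containing 0. -/
/-- Faces of `conv({0} ∪ Δ)` not containing `0` are exactly the faces of `Δ`,
when `Δ` is a nonempty compact convex subset of `ℝⁿ` contained in an affine
hyperplane `{x | ℓ x = 1}`. A face of a convex set `C` is a convex subset `F ⊆ C`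
that is extreme in `C`. -/
theorem stmt_1 {n : ℕ} (Δ : Set (EuclideanSpace ℝ (Fin n)))
    (hne : Δ.Nonempty) (hcpt : IsCompact Δ) (hconv : Convex ℝ Δ)
    (ℓ : EuclideanSpace ℝ (Fin n) →ₗ[ℝ] ℝ) (hΔ : ∀ x ∈ Δ, ℓ x = 1) :
    ∀ F : Set (EuclideanSpace ℝ (Fin n)),
      (Convex ℝ F ∧ IsExtreme ℝ (convexHull ℝ ({0} ∪ Δ)) F ∧ 0 ∉ F) ↔
      (Convex ℝ F ∧ IsExtreme ℝ Δ F) := by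
  set C := convexHull ℝ ({0} ∪ Δ) with hCdef
  have hΔC : Δ ⊆ C := (Set.subset_union_right).trans (subset_convexHull ℝ _)
  have h0C : (0 : EuclideanSpace ℝ (Fin n)) ∈ C :=
    subset_convexHull ℝ _ (Set.mem_union_left _ rfl)
  have hmem : ∀ x, x ∈ C ↔ ∃ z ∈ Δ, ∃ t : ℝ, 0 ≤ t ∧ t ≤ 1 ∧ t • z = x := by
    intro x
    rw [hCdef, Set.singleton_union, convexHull_insert hne, hconv.convexHull_eq]
    simp only [mem_convexJoin, Set.mem_singleton_iff]
    constructor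
    · rintro ⟨a, rfl, z, hz, hx⟩
      rw [segment_eq_image] at hx
      obtain ⟨t, ht, hx⟩ := hx
      refine ⟨z, hz, t, ht.1, ht.2, ?_⟩
      simpa using hx
    · rintro ⟨z, hz, t, ht0, ht1, hx⟩
      refine ⟨0, rfl, z, hz, ?_⟩
      rw [segment_eq_image]
      exact ⟨t, ⟨ht0, ht1⟩, by simpa using hx⟩
  intro F
  constructor
  · rintro ⟨hFconv, hFext, h0F⟩
    have hFΔ : F ⊆ Δ := by
      intro x hxF
      obtain ⟨z, hz, t, ht0, ht1, hx⟩ := (hmem x).1 (hFext.1 hxF)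
      rcases eq_or_lt_of_le ht1 with h1 | h1
      · rw [← hx, h1, one_smul]; exact hz
      rcases eq_or_lt_of_le ht0 with h0 | h0
      · exfalso; apply h0F
        have : x = 0 := by rw [← hx, ← h0, zero_smul]
        rwa [this] at hxF
      · exfalso; apply h0F
        have hxseg : x ∈ openSegment ℝ (0 : EuclideanSpace ℝ (Fin n)) z := by
          refine ⟨1 - t, t, by linarith, h0, by ring, ?_⟩
          rw [smul_zero, zero_add, hx]
        exact hFext.2 h0C (hΔC hz) hxF hxseg
    refine ⟨hFconv, hFΔ, ?_⟩
    intro x hx y hy p hp hseg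
    exact hFext.2 (hΔC hx) (hΔC hy) hp hseg
  · rintro ⟨hFconv, hFext⟩
    have h0F : (0 : EuclideanSpace ℝ (Fin n)) ∉ F := by
      intro h
      have := hΔ 0 (hFext.1 h)
      simp at this
    refine ⟨hFconv, ⟨hFext.1.trans hΔC, ?_⟩, h0F⟩
    intro x hx y hy p hp hseg
    obtain ⟨a, haΔ, s, hs0, hs1, hxa⟩ := (hmem x).1 hx
    obtain ⟨b, hbΔ, t, ht0, ht1, hyb⟩ := (hmem y).1 hy
    have hseg' := hseg
    obtain ⟨u, v, hu, hv, huv, hp'⟩ := hseg'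
    have hℓx : ℓ x = s := by rw [← hxa, map_smul, smul_eq_mul, hΔ a haΔ, mul_one]
    have hℓy : ℓ y = t := by rw [← hyb, map_smul, smul_eq_mul, hΔ b hbΔ, mul_one]
    have hℓp : ℓ p = 1 := hΔ p (hFext.1 hp)
    have heq : u * s + v * t = 1 := by
      rw [← hℓp, ← hp']
      simp [map_add, map_smul, hℓx, hℓy, smul_eq_mul]
    have hs : s = 1 := by nlinarith
    have ht : t = 1 := by nlinarith
    have hxΔ : x ∈ Δ := by rw [← hxa, hs, one_smul]; exact haΔ
    have hyΔ : y ∈ Δ := by rw [← hyb, ht, one_smul]; exact hbΔ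
    exact hFext.2 hxΔ hyΔ hp hseg
end

section
/- Let D be a discrete valuation ring with uniformizer λ, and let f : M → N be an injective D-linear map of D-modules such that λˢ·N ⊆ range(f) for some s ≥ 0. Then f restricts to a D-linear isomorphism from f⁻¹(λˢN) onto λˢN, and for every n ≥ 1, f induces an isomorphism f⁻¹(λˢN) / λⁿ·f⁻¹(λˢN) ≅ λˢN / λ^{n+s}N. -/
open Pointwise

/-- Let `D` be a DVR with uniformizer `ϖ`, and `f : M → N` an injective `D`-linear map
with `ϖˢ·N ⊆ range f`. Then `f` restricts to an isomorphism `f⁻¹(ϖˢN) ≃ ϖˢN`, and for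
every `n ≥ 1`, `f` induces an isomorphism `f⁻¹(ϖˢN)/ϖⁿ·f⁻¹(ϖˢN) ≅ ϖˢN/ϖ^{n+s}N`. -/
theorem stmt_8 (D : Type*) [CommRing D] [IsDomain D] [IsDiscreteValuationRing D]
    (ϖ : D) (hϖ : Irreducible ϖ)
    (M N : Type*) [AddCommGroup M] [Module D M] [AddCommGroup N] [Module D N]
    (f : M →ₗ[D] N) (hinj : Function.Injective f) (s : ℕ)
    (hs : ∀ y : N, ϖ ^ s • y ∈ LinearMap.range f) :
    (∃ e : (Submodule.comap f (ϖ ^ s • ⊤ : Submodule D N)) ≃ₗ[D]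
        (ϖ ^ s • ⊤ : Submodule D N), ∀ x, (e x : N) = f x.1) ∧
    ∀ n : ℕ, 1 ≤ n →
      ∃ e : ((Submodule.comap f (ϖ ^ s • ⊤ : Submodule D N)) ⧸
              (ϖ ^ n • ⊤ : Submodule D (Submodule.comap f (ϖ ^ s • ⊤ : Submodule D N)))) ≃ₗ[D]
            ((ϖ ^ s • ⊤ : Submodule D N) ⧸
              Submodule.comap (ϖ ^ s • ⊤ : Submodule D N).subtype
                (ϖ ^ (n + s) • ⊤ : Submodule D N)),
        ∀ x : (Submodule.comap f (ϖ ^ s • ⊤ : Submodule D N)),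
          e (Submodule.Quotient.mk x) =
            Submodule.Quotient.mk (⟨f x.1, Submodule.mem_comap.mp x.2⟩ :
              (ϖ ^ s • ⊤ : Submodule D N)) := by
  classical
  set P := Submodule.comap f (ϖ ^ s • ⊤ : Submodule D N) with hP
  set Q := (ϖ ^ s • ⊤ : Submodule D N) with hQ
  -- the restricted map
  let g : P →ₗ[D] Q := f.restrict (fun x hx => hx)
  have hg : ∀ x : P, (g x : N) = f x.1 := fun x => rfl
  have hginj : Function.Injective g := by
    intro a b hab
    have : f a.1 = f b.1 := by
      have := congrArg (Subtype.val) hab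
      simpa [hg] using this
    exact Subtype.ext (hinj this)
  have hgsurj : Function.Surjective g := by
    rintro ⟨y, hy⟩
    obtain ⟨z, hz, rfl⟩ := Set.mem_smul_set.mp hy
    obtain ⟨x, hx⟩ := hs z
    refine ⟨⟨x, ?_⟩, ?_⟩
    · show f x ∈ Q
      rw [hx]
      exact Set.smul_mem_smul_set (Set.mem_univ z)
    · apply Subtype.ext
      simpa [hg] using hx
  let e : P ≃ₗ[D] Q := LinearEquiv.ofBijective g ⟨hginj, hgsurj⟩
  have he : ∀ x : P, (e x : N) = f x.1 := fun x => rfl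
  refine ⟨⟨e, he⟩, ?_⟩
  intro n hn
  -- key: map e (ϖ^n • ⊤) = comap Q.subtype (ϖ^(n+s) • ⊤)
  have hmap : (ϖ ^ n • ⊤ : Submodule D P).map (e : P →ₗ[D] Q)
      = Submodule.comap Q.subtype (ϖ ^ (n + s) • ⊤ : Submodule D N) := by
    ext y
    constructor
    · rintro ⟨x, hx, rfl⟩
      obtain ⟨w, -, rfl⟩ := Set.mem_smul_set.mp hx
      show f ((ϖ ^ n • w : P) : M) ∈ (ϖ ^ (n + s) • ⊤ : Submodule D N)
      have hw : f w.1 ∈ Q := w.2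
      obtain ⟨z, -, hz⟩ := Set.mem_smul_set.mp hw
      refine Set.mem_smul_set.mpr ⟨z, Set.mem_univ z, ?_⟩
      have : f ((ϖ ^ n • w : P) : M) = ϖ ^ n • f w.1 := by
        simp [Submodule.coe_smul]
      rw [this, ← hz, pow_add, smul_smul, mul_comm]
    · intro hy
      have hy' : (y : N) ∈ (ϖ ^ (n + s) • ⊤ : Submodule D N) := hy
      obtain ⟨z, -, hz⟩ := Set.mem_smul_set.mp hy'
      obtain ⟨w, hw⟩ := hs z
      have hwP : w ∈ P := by
        show f w ∈ Q
        rw [hw]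
        exact Set.smul_mem_smul_set (Set.mem_univ z)
      have hfy : f (ϖ ^ n • w) = (y : N) := by
        rw [map_smul, hw, smul_smul, ← pow_add]; exact hz
      refine ⟨⟨ϖ ^ n • w, ?_⟩, ?_, ?_⟩
      · show f (ϖ ^ n • w) ∈ Q
        rw [hfy]; exact y.2
      · exact Set.mem_smul_set.mpr ⟨⟨w, hwP⟩, Set.mem_univ _, rfl⟩
      · exact Subtype.ext hfy
  exact ⟨Submodule.Quotient.equiv _ _ e hmap, fun x => rfl⟩
end

section
/- Let C be a coalgebra over a field k and M a (right) C-comodule. Then every element m ∈ M is contained in a subcomodule of M that is finite-dimensional as a k-vector space. In particular, every element of C itself lies in a finite-dimensional subcoalgebra/subcomodule. -/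
open TensorProduct

/-- A right coaction `ρ : M → M ⊗ C` of a coalgebra `C` on `M`, i.e. a linear map
satisfying coassociativity and the counit axiom. -/
structure IsCoaction (k C M : Type*) [Field k]
    [AddCommGroup C] [Module k C] [Coalgebra k C] [AddCommGroup M] [Module k M]
    (ρ : M →ₗ[k] M ⊗[k] C) : Prop where
  coassoc : ∀ m : M,
    (TensorProduct.assoc k M C C) ((TensorProduct.map ρ LinearMap.id) (ρ m)) =
      (TensorProduct.map LinearMap.id Coalgebra.comul) (ρ m)
  counit : ∀ m : M,
    (TensorProduct.rid k M) ((TensorProduct.map LinearMap.id Coalgebra.counit) (ρ m)) = m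

set_option linter.unusedSectionVars false

section Aux

variable {k C M : Type*} [Field k] [AddCommGroup C] [Module k C] [Coalgebra k C]
  [AddCommGroup M] [Module k M] {ι : Type*} [DecidableEq ι]

/-- Coefficient equivalence attached to a basis of `C`. -/
noncomputable def coeffEquiv (b : Module.Basis ι k C) : (M ⊗[k] C) ≃ₗ[k] (ι →₀ M) :=
  (TensorProduct.congr (LinearEquiv.refl k M) b.repr).trans
    (TensorProduct.finsuppScalarRight k k M ι)

lemma coeffEquiv_tmul (b : Module.Basis ι k C) (x : M) (c : C) (j : ι) :
    coeffEquiv b (x ⊗ₜ[k] c) j = b.repr c j • x := by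
  simp [coeffEquiv, TensorProduct.finsuppScalarRight_apply_tmul_apply]

lemma coeffEquiv_symm_single (b : Module.Basis ι k C) (i : ι) (x : M) :
    (coeffEquiv b).symm (Finsupp.single i x) = x ⊗ₜ[k] b i := by
  rw [LinearEquiv.symm_apply_eq]
  ext j
  simp [coeffEquiv_tmul, Finsupp.single_apply, Module.Basis.repr_self]

lemma tensor_eq_sum (b : Module.Basis ι k C) (t : M ⊗[k] C) :
    t = (coeffEquiv b t).sum fun i x => x ⊗ₜ[k] b i := by
  conv_lhs => rw [← (coeffEquiv b).symm_apply_apply t, ← Finsupp.sum_single (coeffEquiv b t)]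
  rw [map_finsuppSum]
  exact Finsupp.sum_congr fun i _ => coeffEquiv_symm_single b i _

theorem main (ρ : M →ₗ[k] M ⊗[k] C) (hρ : IsCoaction k C M ρ) (m : M) :
    ∃ N : Submodule k M, m ∈ N ∧ FiniteDimensional k N ∧
      ∀ x ∈ N, ρ x ∈ LinearMap.range
        (TensorProduct.map N.subtype (LinearMap.id : C →ₗ[k] C)) := by
  classical
  set b := Module.Basis.ofVectorSpace k C with hb
  set g : _ →₀ M := coeffEquiv b (ρ m) with hgdef
  set N : Submodule k M := Submodule.span k (↑(g.support.image g) : Set M) with hN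
  have hgN : ∀ i, g i ∈ N := by
    intro i
    by_cases h : i ∈ g.support
    · exact Submodule.subset_span (Finset.mem_coe.mpr (Finset.mem_image_of_mem g h))
    · rw [Finsupp.notMem_support_iff.mp h]; exact N.zero_mem
  have hfd : FiniteDimensional k N := FiniteDimensional.span_of_finite k (Finset.finite_toSet _)
  have hρm : ρ m = ∑ i ∈ g.support, g i ⊗ₜ[k] b i := by
    conv_lhs => rw [tensor_eq_sum b (ρ m)]
    rfl
  -- m ∈ N
  have hmN : m ∈ N := by
    have hm : m = ∑ i ∈ g.support, Coalgebra.counit (R := k) (b i) • g i := by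
      conv_lhs => rw [← hρ.counit m, hρm]
      rw [map_sum, map_sum]
      simp [TensorProduct.map_tmul, TensorProduct.rid_tmul]
    rw [hm]
    exact Submodule.sum_mem _ fun i _ => N.smul_mem _ (hgN i)
  -- the extraction maps
  set T : ↑(Module.Basis.ofVectorSpaceIndex k C) → (C ⊗[k] C →ₗ[k] C) := fun j =>
    (TensorProduct.rid k C).toLinearMap ∘ₗ LinearMap.lTensor C (b.coord j) with hT
  have h1 : ∀ (t : M ⊗[k] C) (c : C) (j : ↑(Module.Basis.ofVectorSpaceIndex k C)),
      LinearMap.lTensor M (T j) ((TensorProduct.assoc k M C C) (t ⊗ₜ[k] c)) =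
        b.repr c j • t := by
    intro t c j
    induction t using TensorProduct.induction_on with
    | zero => simp
    | tmul x d =>
      simp [T, TensorProduct.assoc_tmul, TensorProduct.rid_tmul, smul_tmul', tmul_smul]
    | add u v hu hv => rw [add_tmul, map_add, map_add, hu, hv, smul_add]
  have key : ∀ j : ↑(Module.Basis.ofVectorSpaceIndex k C), ρ (g j) = ∑ i ∈ g.support, g i ⊗ₜ[k] (T j (Coalgebra.comul (b i))) := by
    intro j
    have lhs : LinearMap.lTensor M (T j)
        ((TensorProduct.assoc k M C C) ((TensorProduct.map ρ LinearMap.id) (ρ m))) = ρ (g j) := by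
      rw [hρm, map_sum, map_sum, map_sum]
      have hterm : ∀ i ∈ g.support,
          LinearMap.lTensor M (T j) ((TensorProduct.assoc k M C C)
            ((TensorProduct.map ρ LinearMap.id) (g i ⊗ₜ[k] b i))) = b.repr (b i) j • ρ (g i) := by
        intro i _
        rw [TensorProduct.map_tmul]
        simpa using h1 (ρ (g i)) (b i) j
      rw [Finset.sum_congr rfl hterm]
      have hsum : (∑ i ∈ g.support, b.repr (b i) j • g i) = g j := by
        by_cases hj : j ∈ g.support
        · rw [Finset.sum_eq_single j]
          · simp
          · intro i _ hij; simp [Module.Basis.repr_self, Finsupp.single_apply, hij]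
          · intro h; exact absurd hj h
        · rw [Finsupp.notMem_support_iff.mp hj, Finset.sum_eq_zero]
          intro i hi
          have : i ≠ j := fun h => hj (h ▸ hi)
          simp [Module.Basis.repr_self, Finsupp.single_apply, this]
      rw [← hsum, map_sum]
      exact Finset.sum_congr rfl fun i _ => (map_smul ρ _ _).symm
    have rhs : LinearMap.lTensor M (T j)
        ((TensorProduct.map LinearMap.id Coalgebra.comul) (ρ m)) =
        ∑ i ∈ g.support, g i ⊗ₜ[k] (T j (Coalgebra.comul (b i))) := by
      rw [hρm, map_sum, map_sum]
      simp [TensorProduct.map_tmul, LinearMap.lTensor_tmul]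
    rw [← lhs, hρ.coassoc m, rhs]
  refine ⟨N, hmN, hfd, ?_⟩
  have hle : N ≤ Submodule.comap ρ
      (LinearMap.range (TensorProduct.map N.subtype (LinearMap.id : C →ₗ[k] C))) := by
    rw [hN, Submodule.span_le]
    intro y hy
    obtain ⟨i, hi, rfl⟩ := Finset.mem_image.mp (Finset.mem_coe.mp hy)
    simp only [Submodule.mem_comap, SetLike.mem_coe]
    rw [key i]
    refine Submodule.sum_mem _ fun i' _ => ?_
    exact ⟨(⟨g i', hgN i'⟩ : N) ⊗ₜ[k] (T i (Coalgebra.comul (b i'))), by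
      simp [TensorProduct.map_tmul]⟩
  exact fun x hx => hle hx

end Aux

/-- Fundamental theorem of comodules: every element of a comodule over a coalgebra lies in
a finite-dimensional subcomodule; in particular every element of the coalgebra itself lies
in a finite-dimensional subspace stable under comultiplication. -/
theorem stmt_11 (k C M : Type*) [Field k]
    [AddCommGroup C] [Module k C] [Coalgebra k C] [AddCommGroup M] [Module k M]
    (ρ : M →ₗ[k] M ⊗[k] C) (hρ : IsCoaction k C M ρ) :
    (∀ m : M, ∃ N : Submodule k M, m ∈ N ∧ FiniteDimensional k N ∧
      ∀ x ∈ N, ρ x ∈ LinearMap.range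
        (TensorProduct.map N.subtype (LinearMap.id : C →ₗ[k] C))) ∧
    (∀ c : C, ∃ D : Submodule k C, c ∈ D ∧ FiniteDimensional k D ∧
      ∀ x ∈ D, Coalgebra.comul (R := k) x ∈ LinearMap.range
        (TensorProduct.map D.subtype (LinearMap.id : C →ₗ[k] C))) := by
  constructor
  · exact main ρ hρ
  · have hc : IsCoaction k C C (Coalgebra.comul (R := k)) := by
      constructor
      · intro c
        have := Coalgebra.coassoc_apply (R := k) (A := C) c
        simpa [LinearMap.rTensor, LinearMap.lTensor] using this
      · intro c
        have := Coalgebra.lTensor_counit_comul (R := k) (A := C) c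
        simp only [LinearMap.lTensor] at this
        rw [this, TensorProduct.rid_tmul, one_smul]
    exact main _ hc
end
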